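/- Let q₁, …, qₙ ≥ 2 be pairwise coprime integers and 2 ≤ K ≤ q₁⋯qₙ. For every coordinate i ∈ {1,…,n} and every subset S ⊆ {1,…,n} \ {i} with wt(S) = ∏_{j∈S} q_j < K, there exist integers x ≠ y with 0 ≤ x, y < K such that x ≡ y (mod q_j) for all j ∈ S but x ≢ y (mod q_i). In particular, S is not a helper set for coordinate i in the Chinese Remainder code CR(q, K). -/

import Mathlib

/-- The weight of a set `I` of coordinates: the product of the moduli indexed by `I`. -/
def wtS {ι : Type} (q : ι → ℕ) (I : Finset ι) : ℕ := ∏ i ∈ I, q i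

/-- `S` is a helper set for coordinate `i` in the code `C`: `i ∉ S` and any two codewords
agreeing on all coordinates of `S` also agree at coordinate `i`. -/
def IsHelperSet {ι : Type} (q : ι → ℕ) (C : Finset (∀ i : ι, ZMod (q i)))
    (i : ι) (S : Finset ι) : Prop :=
  i ∉ S ∧ ∀ a ∈ C, ∀ b ∈ C, (∀ j ∈ S, a j = b j) → a i = b i

/-- Coordinate `i` has locality `r` in `C`: some helper set `S` for `i` has `wt(S) ≤ (q i)^r`. -/
def HasLocalityAt {ι : Type} (q : ι → ℕ) (C : Finset (∀ i : ι, ZMod (q i)))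
    (i : ι) (r : ℝ) : Prop :=
  ∃ S : Finset ι, IsHelperSet q C i S ∧ (wtS q S : ℝ) ≤ (q i : ℝ) ^ r

/-- The Chinese Remainder code: residue vectors of the integers `0 ≤ x < K`. -/
def CRcode {ι : Type} [Fintype ι] [DecidableEq ι] (q : ι → ℕ) (K : ℕ) :
    Finset (∀ i : ι, ZMod (q i)) :=
  (Finset.range K).image (fun x => fun i => (x : ZMod (q i)))

/-- In a Chinese Remainder code `CR(q, K)`, no set `S` with `wt(S) < K` can be a helper
set for a coordinate `i ∉ S`: there are distinct `x, y ∈ [0, K)` congruent modulo `q j`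
for all `j ∈ S` but not modulo `q i`. -/
theorem statement5 {n : ℕ} (hn : 1 ≤ n) (q : Fin n → ℕ) (hq : ∀ i, 2 ≤ q i)
    (hcop : ∀ i j : Fin n, i ≠ j → Nat.Coprime (q i) (q j))
    (K : ℕ) (hK2 : 2 ≤ K) (hKN : K ≤ ∏ i, q i)
    (i : Fin n) (S : Finset (Fin n)) (hiS : i ∉ S)
    (hwt : wtS q S < K) :
    (∃ x y : ℕ, x < K ∧ y < K ∧ x ≠ y ∧
      (∀ j ∈ S, x ≡ y [MOD q j]) ∧ ¬ (x ≡ y [MOD q i]))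
    ∧ ¬ IsHelperSet q (CRcode q K) i S := by
  classical
  have hWpos : 0 < wtS q S := Finset.prod_pos (fun j _ => lt_of_lt_of_le two_pos (hq j))
  have hdvd : ∀ j ∈ S, q j ∣ wtS q S := fun j hj => Finset.dvd_prod_of_mem q hj
  have hcopW : Nat.Coprime (q i) (wtS q S) :=
    Nat.Coprime.prod_right (fun j hj => hcop i j (fun h => hiS (h ▸ hj)))
  have hndvd : ¬ q i ∣ wtS q S := fun h => by
    have h1 : q i = 1 := Nat.Coprime.eq_one_of_dvd hcopW h
    have := hq i; omega
  have hmod : ∀ j ∈ S, (0 : ℕ) ≡ wtS q S [MOD q j] :=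
    fun j hj => ((Nat.modEq_zero_iff_dvd).mpr (hdvd j hj)).symm
  have hnmod : ¬ (0 : ℕ) ≡ wtS q S [MOD q i] :=
    fun h => hndvd ((Nat.modEq_zero_iff_dvd).mp h.symm)
  refine ⟨⟨0, wtS q S, by omega, hwt, by omega, hmod, hnmod⟩, ?_⟩
  rintro ⟨-, hhelp⟩
  have h0mem : (fun j => ((0:ℕ) : ZMod (q j))) ∈ CRcode q K :=
    Finset.mem_image.mpr ⟨0, Finset.mem_range.mpr (by omega), rfl⟩
  have hWmem : (fun j => ((wtS q S : ℕ) : ZMod (q j))) ∈ CRcode q K :=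
    Finset.mem_image.mpr ⟨wtS q S, Finset.mem_range.mpr hwt, rfl⟩
  have key := hhelp _ h0mem _ hWmem (fun j hj => by
    have : NeZero (q j) := ⟨by have := hq j; omega⟩
    simpa [ZMod.natCast_eq_zero_iff] using ((ZMod.natCast_eq_zero_iff _ _).mpr (hdvd j hj)).symm)
  have : NeZero (q i) := ⟨by have := hq i; omega⟩
  exact hndvd ((ZMod.natCast_eq_zero_iff _ _).mp (by simpa using key.symm))
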